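/- Let a, b, ε, y ∈ ℂ ∖ {0} with a ∉ {y, −y}, b ∉ {y, −y}, ε ∉ {y, −y}, and let z_{k,m} = h_{k,m}(y). Then for an integer n ≥ 1, the map z is periodic with period n in the first variable (i.e. z_{k+n,m} = z_{k,m} for all (k, m) ∈ ℤ²) if and only if n is even and ((a − y)/(a + y))ⁿ = 1. -/
import Mathlib


/-- `hfun a b ε y k m = A^k·B^m·E^δ` where `A = (a−y)/(a+y)`, `B = (b−y)/(b+y)`,
`E = (ε+y)/(ε−y)`, and `δ = 1` if `k+m` is odd, `δ = 0` if `k+m` is even. -/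
noncomputable def hfun (a b ε y : ℂ) (k m : ℤ) : ℂ :=
  ((a - y) / (a + y)) ^ k * ((b - y) / (b + y)) ^ m *
    (if Even (k + m) then 1 else (ε + y) / (ε - y))

/-- The zigzag map `z_{k,m} = h_{k,m}(y)` is periodic with period `n ≥ 1` in the
first variable if and only if `n` is even and `((a − y)/(a + y))ⁿ = 1`. -/
theorem zigzag_periodic_iff (a b ε y : ℂ)
    (ha0 : a ≠ 0) (hb0 : b ≠ 0) (he0 : ε ≠ 0) (hy0 : y ≠ 0)
    (hay : a ≠ y) (hay' : a ≠ -y) (hby : b ≠ y) (hby' : b ≠ -y)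
    (hey : ε ≠ y) (hey' : ε ≠ -y)
    (n : ℕ) (hn : 1 ≤ n) :
    (∀ k m : ℤ, hfun a b ε y (k + n) m = hfun a b ε y k m) ↔
      (Even n ∧ ((a - y) / (a + y)) ^ n = 1) := by
  set A := (a - y) / (a + y) with hAdef
  set B := (b - y) / (b + y) with hBdef
  set E := (ε + y) / (ε - y) with hEdef
  have hay2 : a + y ≠ 0 := fun h => hay' (by linear_combination h)
  have hby2 : b + y ≠ 0 := fun h => hby' (by linear_combination h)
  have hey2 : ε - y ≠ 0 := sub_ne_zero.mpr hey
  have hA0 : A ≠ 0 := div_ne_zero (sub_ne_zero.mpr hay) hay2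
  have hB0 : B ≠ 0 := div_ne_zero (sub_ne_zero.mpr hby) hby2
  have hE1 : E ≠ 1 := by
    intro h
    rw [hEdef, div_eq_one_iff_eq hey2] at h
    exact hy0 (by linear_combination h / 2)
  have hE1' : E ≠ -1 := by
    intro h
    rw [hEdef, div_eq_iff hey2] at h
    exact he0 (by linear_combination h / 2)
  constructor
  · intro h
    have h1 := h 0 0
    have h2 := h 0 1
    simp only [hfun, ← hAdef, ← hBdef, ← hEdef, zero_add, add_zero, zpow_zero,
      one_mul, mul_one, zpow_one] at h1 h2
    rw [if_pos (by decide : Even (0:ℤ))] at h1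
    rw [if_neg (by decide : ¬ Even (1:ℤ))] at h2
    by_cases hev : Even n
    · refine ⟨hev, ?_⟩
      have hev' : Even ((n : ℤ)) := Int.even_coe_nat n |>.mpr hev
      rw [if_pos hev'] at h1
      rw [zpow_natCast] at h1
      simpa using h1
    · exfalso
      have hodd : ¬ Even ((n : ℤ)) := fun h => hev ((Int.even_coe_nat n).mp h)
      rw [if_neg hodd] at h1
      have hev2 : Even ((n : ℤ) + 1) := by
        rcases Int.even_or_odd (n : ℤ) with h' | h'
        · exact absurd h' hodd
        · exact h'.add_one
      rw [if_pos hev2, mul_one] at h2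
      -- h1 : A ^ (n:ℤ) * E = 1, h2 : A ^ (n:ℤ) * B = B * E
      have hAE : A ^ (n : ℤ) = E := by
        have := mul_right_cancel₀ hB0 (by linear_combination h2 : A ^ (n:ℤ) * B = E * B)
        exact this
      rw [hAE] at h1
      rcases mul_self_eq_one_iff.mp h1 with h | h
      · exact hE1 h
      · exact hE1' h
  · rintro ⟨hev, hA1⟩ k m
    have hev' : Even ((n : ℤ)) := Int.even_coe_nat n |>.mpr hev
    have hpar : Even (k + (n : ℤ) + m) ↔ Even (k + m) := by
      rw [add_right_comm, Int.even_add]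
      simp [hev']
    have hAk : A ^ (k + (n : ℤ)) = A ^ k := by
      rw [zpow_add₀ hA0, zpow_natCast, hA1, mul_one]
    simp only [hfun, ← hAdef, ← hBdef, ← hEdef, hAk, hpar]
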